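/- Let E, A ∈ ℂ^{n×n}, B ∈ ℂ^{n×m}, C ∈ ℂ^{m×n}, D ∈ ℂ^{m×m}, and suppose X ∈ ℂ^{n×n} is a solution of the discrete-time impedance KYP inequality (d-iKYP). Then for every z ∈ ℂ with |z| > 1 such that zE − A is invertible, the matrix T(z) + T(z)^H is positive semidefinite, where T(z) := C (zE − A)^{-1} B + D is the transfer function of the system. -/

import Mathlib

open Matrix
open scoped ComplexOrder

private lemma conj_quad {k l p : Type*} [Fintype k] [Fintype l] [Fintype p]
    (P : Matrix k l ℂ) (X : Matrix k k ℂ) (Q : Matrix k p ℂ) (a : l → ℂ) (b : p → ℂ) :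
    star a ⬝ᵥ ((Pᴴ * X * Q) *ᵥ b) = star (P *ᵥ a) ⬝ᵥ (X *ᵥ (Q *ᵥ b)) := by
  simp only [star_mulVec, dotProduct_mulVec, vecMul_vecMul, Matrix.mul_assoc]

private lemma conj_dot {k l : Type*} [Fintype k] [Fintype l]
    (M : Matrix k l ℂ) (a : l → ℂ) (b : k → ℂ) :
    star a ⬝ᵥ (Mᴴ *ᵥ b) = star (M *ᵥ a) ⬝ᵥ b := by
  rw [star_mulVec, dotProduct_mulVec]

/-- If the discrete-time impedance KYP inequality (d-iKYP) is solvable, then the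
transfer function `T(z) = C (zE - A)⁻¹ B + D` satisfies `T(z) + T(z)ᴴ ≥ 0` for all
`|z| > 1` at which `zE - A` is invertible (positive realness). -/
theorem diKYP_implies_positive_real
    (n m : ℕ)
    (E A X : Matrix (Fin n) (Fin n) ℂ)
    (B : Matrix (Fin n) (Fin m) ℂ)
    (C : Matrix (Fin m) (Fin n) ℂ)
    (D : Matrix (Fin m) (Fin m) ℂ)
    (hX : X.PosSemidef)
    (hKYP : (Matrix.fromBlocks
        (-(Aᴴ * X * A) + Eᴴ * X * E) (Cᴴ - Aᴴ * X * B)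
        (C - Bᴴ * X * A) (D + Dᴴ - Bᴴ * X * B)).PosSemidef) :
    ∀ z : ℂ, 1 < ‖z‖ → IsUnit (z • E - A) →
      ((C * (z • E - A)⁻¹ * B + D) + (C * (z • E - A)⁻¹ * B + D)ᴴ).PosSemidef := by
  intro z hz hU
  refine Matrix.PosSemidef.of_dotProduct_mulVec_nonneg (Matrix.isHermitian_add_transpose_self _) (fun u => ?_)
  set F : Matrix (Fin n) (Fin n) ℂ := z • E - A with hFdef
  set x : Fin n → ℂ := F⁻¹ *ᵥ (B *ᵥ u) with hxdef
  have hdet : IsUnit F.det := (Matrix.isUnit_iff_isUnit_det F).mp hU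
  have hFx : F *ᵥ x = B *ᵥ u := by
    rw [hxdef, mulVec_mulVec, Matrix.mul_nonsing_inv F hdet, Matrix.one_mulVec]
  have hAx : A *ᵥ x = z • (E *ᵥ x) - B *ᵥ u := by
    have h1 : (z • E - A) *ᵥ x = B *ᵥ u := hFx
    rw [Matrix.sub_mulVec, Matrix.smul_mulVec] at h1
    linear_combination (norm := module) -h1
  set e : Fin n → ℂ := E *ᵥ x with hedef
  set b : Fin n → ℂ := B *ᵥ u with hbdef
  -- atoms
  set pee : ℂ := star e ⬝ᵥ (X *ᵥ e) with hpee
  set peb : ℂ := star e ⬝ᵥ (X *ᵥ b) with hpeb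
  set pbe : ℂ := star b ⬝ᵥ (X *ᵥ e) with hpbe
  set pbb : ℂ := star b ⬝ᵥ (X *ᵥ b) with hpbb
  set c1 : ℂ := star (C *ᵥ x) ⬝ᵥ u with hc1
  set c2 : ℂ := star u ⬝ᵥ (C *ᵥ x) with hc2
  set d1 : ℂ := star u ⬝ᵥ (D *ᵥ u) with hd1
  set d2 : ℂ := star (D *ᵥ u) ⬝ᵥ u with hd2
  have hS : (0:ℂ) ≤ (1 - star z * z) * pee + (c1 + c2 + d1 + d2) := by
    have h := hKYP.dotProduct_mulVec_nonneg (Sum.elim x u)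
    have hstar : star (Sum.elim x u) = Sum.elim (star x) (star u) := by
      ext i; cases i <;> rfl
    rw [Matrix.fromBlocks_mulVec, hstar, Sum.elim_comp_inl, Sum.elim_comp_inr,
      sumElim_dotProduct_sumElim] at h
    have hexp : star x ⬝ᵥ ((-(Aᴴ * X * A) + Eᴴ * X * E) *ᵥ x + (Cᴴ - Aᴴ * X * B) *ᵥ u)
        + star u ⬝ᵥ ((C - Bᴴ * X * A) *ᵥ x + (D + Dᴴ - Bᴴ * X * B) *ᵥ u)
        = (1 - star z * z) * pee + (c1 + c2 + d1 + d2) := by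
      simp only [Matrix.add_mulVec, Matrix.sub_mulVec, Matrix.neg_mulVec,
        dotProduct_add, dotProduct_sub, dotProduct_neg,
        conj_quad, conj_dot, hAx, Matrix.mulVec_sub, Matrix.mulVec_smul,
        star_sub, star_smul, sub_dotProduct, smul_dotProduct, dotProduct_smul,
        smul_eq_mul]
      simp only [← hedef, ← hbdef, ← hpee, ← hpeb, ← hpbe, ← hpbb,
        ← hc1, ← hc2, ← hd1, ← hd2]
      ring
    rw [hexp] at h
    exact h
  have hTu : (C * F⁻¹ * B + D) *ᵥ u = C *ᵥ x + D *ᵥ u := by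
    rw [Matrix.add_mulVec, ← Matrix.mulVec_mulVec, ← Matrix.mulVec_mulVec, ← hxdef]
  have hmain : star u ⬝ᵥ (((C * F⁻¹ * B + D) + (C * F⁻¹ * B + D)ᴴ) *ᵥ u)
      = ((1 - star z * z) * pee + (c1 + c2 + d1 + d2)) + (star z * z - 1) * pee := by
    rw [Matrix.add_mulVec, dotProduct_add, conj_dot, hTu]
    simp only [dotProduct_add, star_add, add_dotProduct]
    simp only [← hc1, ← hc2, ← hd1, ← hd2]
    ring
  rw [hmain]
  have h2 : (0:ℂ) ≤ (star z * z - 1) * pee := by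
    apply mul_nonneg
    · have : star z * z - 1 = ((Complex.normSq z - 1 : ℝ) : ℂ) := by
        rw [Complex.star_def, ← Complex.normSq_eq_conj_mul_self]
        push_cast
        ring
      rw [this, Complex.zero_le_real, sub_nonneg]
      have := hz
      nlinarith [Complex.sq_norm z, norm_nonneg z]
    · exact hX.dotProduct_mulVec_nonneg e
  exact add_nonneg hS h2
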